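/- Let m, n be positive integers with n dividing m, set r = m/n and ε = exp(2πi/m), let k be an integer, and let A be the subgroup of SU(3) generated by F = diag(ε, ε^k, ε^{−k−1}) and G = diag(1, ε^{−r}, ε^{r}). Then conjugation by E maps A into itself (E A E⁻¹ = A) if and only if 1 + k + k² ≡ 0 (mod r); and conjugation by B maps A into itself (B A B⁻¹ = A) if and only if 1 + 2k ≡ 0 (mod r). -/

import Mathlib

open Matrix Complex

noncomputable section

/-- The group `SU(3)`: 3×3 complex unitary matrices of determinant 1. -/
abbrev SU3 : Type := ↥(Matrix.specialUnitaryGroup (Fin 3) ℂ)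

noncomputable instance : Group SU3 :=
  { (inferInstance : Monoid SU3) with
    inv := fun A => ⟨star A.val,
      ⟨Unitary.star_mem A.2.1, by
        have h2 : A.val.det = 1 := A.2.2
        show Matrix.detMonoidHom (star A.val) = 1
        show (star A.val).det = 1
        rw [Matrix.star_eq_conjTranspose, Matrix.det_conjTranspose, h2, star_one]⟩⟩
    inv_mul_cancel := fun A => Subtype.ext A.2.1.1 }

/-- The matrix `E` with rows (0,1,0), (0,0,1), (1,0,0). -/
def EM : Matrix (Fin 3) (Fin 3) ℂ := !![0, 1, 0; 0, 0, 1; 1, 0, 0]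

/-- The matrix `B` with rows (-1,0,0), (0,0,-1), (0,-1,0). -/
def BM : Matrix (Fin 3) (Fin 3) ℂ := !![-1, 0, 0; 0, 0, -1; 0, -1, 0]

/-- `ε = exp(2πi/m)`. -/
def eps (m : ℕ) : ℂ := Complex.exp (2 * Real.pi * Complex.I / m)

/-- The diagonal matrix `F = diag(ε, ε^k, ε^(-k-1))` with `ε = exp(2πi/m)`. -/
def FM (m : ℕ) (k : ℤ) : Matrix (Fin 3) (Fin 3) ℂ :=
  Matrix.diagonal ![eps m, eps m ^ k, eps m ^ (-k - 1)]

/-- The diagonal matrix `G = diag(1, ε^(-r), ε^r)` with `ε = exp(2πi/m)`. -/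
def GM (m r : ℕ) : Matrix (Fin 3) (Fin 3) ℂ :=
  Matrix.diagonal ![1, eps m ^ (-(r : ℤ)), eps m ^ (r : ℤ)]


set_option maxHeartbeats 1000000

lemma eps_ne_zero (m : ℕ) : eps m ≠ 0 := Complex.exp_ne_zero _

lemma eps_zpow_eq_one_iff {m : ℕ} (hm : m ≠ 0) (j : ℤ) : eps m ^ j = 1 ↔ (m:ℤ) ∣ j :=
  (Complex.isPrimitiveRoot_exp m hm).zpow_eq_one_iff_dvd j

lemma eps_zpow_eq_iff {m : ℕ} (hm : m ≠ 0) (a b : ℤ) :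
    eps m ^ a = eps m ^ b ↔ (m:ℤ) ∣ a - b := by
  rw [← eps_zpow_eq_one_iff hm, zpow_sub₀ (eps_ne_zero m),
    div_eq_one_iff_eq (zpow_ne_zero _ (eps_ne_zero m))]

lemma conj_eps (m : ℕ) : starRingEnd ℂ (eps m) = (eps m)⁻¹ := by
  rw [eps, ← Complex.exp_conj, ← Complex.exp_neg]; congr 1; simp [map_ofNat]; ring

def dmat (m : ℕ) (a b c : ℤ) : Matrix (Fin 3) (Fin 3) ℂ :=
  Matrix.diagonal ![eps m ^ a, eps m ^ b, eps m ^ c]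

lemma star_dmat (m : ℕ) (a b c : ℤ) : star (dmat m a b c) = dmat m (-a) (-b) (-c) := by
  rw [Matrix.star_eq_conjTranspose, dmat, Matrix.diagonal_conjTranspose, dmat]
  have h : star ![eps m ^ a, eps m ^ b, eps m ^ c]
      = ![eps m ^ (-a), eps m ^ (-b), eps m ^ (-c)] := by
    funext i
    fin_cases i <;>
      simp [Pi.star_apply, RCLike.star_def, conj_eps, _root_.inv_zpow, _root_.zpow_neg]
  rw [h]

lemma dmat_mul (m : ℕ) (a b c a' b' c' : ℤ) :
    dmat m a b c * dmat m a' b' c' = dmat m (a+a') (b+b') (c+c') := by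
  rw [dmat, dmat, Matrix.diagonal_mul_diagonal, dmat]
  have h : (fun i => ![eps m ^ a, eps m ^ b, eps m ^ c] i * ![eps m ^ a', eps m ^ b', eps m ^ c'] i)
      = ![eps m ^ (a+a'), eps m ^ (b+b'), eps m ^ (c+c')] := by
    funext i; fin_cases i <;> simp [zpow_add₀ (eps_ne_zero m)]
  rw [h]

lemma dmat_one (m : ℕ) : dmat m 0 0 0 = 1 := by
  rw [dmat]
  have h : ![eps m ^ (0:ℤ), eps m ^ (0:ℤ), eps m ^ (0:ℤ)] = fun _ => 1 := by
    funext i; fin_cases i <;> simp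
  rw [h, Matrix.diagonal_one]

lemma dmat_mem (m : ℕ) (a b c : ℤ) (h : a + b + c = 0) :
    dmat m a b c ∈ Matrix.specialUnitaryGroup (Fin 3) ℂ := by
  rw [Matrix.mem_specialUnitaryGroup_iff]
  constructor
  · rw [Matrix.mem_unitaryGroup_iff, star_dmat, dmat_mul]
    simp only [add_neg_cancel]
    exact dmat_one m
  · rw [dmat, Matrix.det_diagonal, Fin.prod_univ_three]
    simp [← zpow_add₀ (eps_ne_zero m)]
    rw [show a + b + c = 0 from h, zpow_zero]

lemma dmat_congr (m : ℕ) {a b c a' b' c' : ℤ} (h1 : a = a') (h2 : b = b') (h3 : c = c') :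
    dmat m a b c = dmat m a' b' c' := by rw [h1, h2, h3]

def dsu (m : ℕ) (k r s t : ℤ) : SU3 :=
  ⟨dmat m s (k*s - r*t) (-(1+k)*s + r*t), dmat_mem m _ _ _ (by ring)⟩

lemma dsu_val (m : ℕ) (k r s t : ℤ) :
    (dsu m k r s t).val = dmat m s (k*s - r*t) (-(1+k)*s + r*t) := rfl

lemma dsu_congr (m : ℕ) (k r : ℤ) {s t s' t' : ℤ} (h1 : s = s') (h2 : t = t') :
    dsu m k r s t = dsu m k r s' t' := by rw [h1, h2]

lemma dsu_mul (m : ℕ) (k r s t s' t' : ℤ) :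
    dsu m k r s t * dsu m k r s' t' = dsu m k r (s+s') (t+t') := by
  apply Subtype.ext
  show (dsu m k r s t).val * (dsu m k r s' t').val = _
  rw [dsu_val, dsu_val, dsu_val, dmat_mul]
  exact dmat_congr m rfl (by ring) (by ring)

lemma dsu_one (m : ℕ) (k r : ℤ) : dsu m k r 0 0 = 1 := by
  apply Subtype.ext
  rw [dsu_val, show ((1:SU3) : Matrix (Fin 3) (Fin 3) ℂ) = 1 from rfl, ← dmat_one m]
  exact dmat_congr m rfl (by ring) (by ring)

lemma inv_val (x : SU3) : (x⁻¹).val = star x.val := rfl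

lemma mul_val (x y : SU3) : ((x * y : SU3) : Matrix (Fin 3) (Fin 3) ℂ) = x.val * y.val := rfl

lemma dsu_inv (m : ℕ) (k r s t : ℤ) : (dsu m k r s t)⁻¹ = dsu m k r (-s) (-t) := by
  apply Subtype.ext
  rw [inv_val, dsu_val, dsu_val, star_dmat]
  exact dmat_congr m rfl (by ring) (by ring)

lemma dsu_zpow (m : ℕ) (k r s t : ℤ) (u : ℤ) :
    (dsu m k r s t) ^ u = dsu m k r (s*u) (t*u) := by
  induction u using Int.induction_on with
  | zero => rw [zpow_zero, ← dsu_one m k r]; exact dsu_congr m k r (by ring) (by ring)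
  | succ i ih =>
    rw [_root_.zpow_add_one, ih, dsu_mul]
    exact dsu_congr m k r (by ring) (by ring)
  | pred i ih =>
    rw [_root_.zpow_sub_one, ih, dsu_inv, dsu_mul]
    exact dsu_congr m k r (by ring) (by ring)

lemma EM_conj (m : ℕ) (a b c : ℤ) : EM * dmat m a b c * star EM = dmat m b c a := by
  ext i j
  fin_cases i <;> fin_cases j <;>
    simp [EM, dmat, Matrix.mul_apply, Fin.sum_univ_three, Matrix.diagonal,
      Matrix.star_eq_conjTranspose, Matrix.conjTranspose_apply, Matrix.vecHead, Matrix.vecTail]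

lemma EM_conj' (m : ℕ) (a b c : ℤ) : star EM * dmat m a b c * EM = dmat m c a b := by
  ext i j
  fin_cases i <;> fin_cases j <;>
    simp [EM, dmat, Matrix.mul_apply, Fin.sum_univ_three, Matrix.diagonal,
      Matrix.star_eq_conjTranspose, Matrix.conjTranspose_apply, Matrix.vecHead, Matrix.vecTail]

lemma BM_conj (m : ℕ) (a b c : ℤ) : BM * dmat m a b c * star BM = dmat m a c b := by
  ext i j
  fin_cases i <;> fin_cases j <;>
    simp [BM, dmat, Matrix.mul_apply, Fin.sum_univ_three, Matrix.diagonal,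
      Matrix.star_eq_conjTranspose, Matrix.conjTranspose_apply, Matrix.vecHead, Matrix.vecTail]

lemma BM_conj' (m : ℕ) (a b c : ℤ) : star BM * dmat m a b c * BM = dmat m a c b := by
  ext i j
  fin_cases i <;> fin_cases j <;>
    simp [BM, dmat, Matrix.mul_apply, Fin.sum_univ_three, Matrix.diagonal,
      Matrix.star_eq_conjTranspose, Matrix.conjTranspose_apply, Matrix.vecHead, Matrix.vecTail]

def Dgrp (m : ℕ) (k r : ℤ) : Subgroup SU3 where
  carrier := {x | ∃ s t : ℤ, x = dsu m k r s t}
  one_mem' := ⟨0, 0, (dsu_one m k r).symm⟩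
  mul_mem' := by
    rintro x y ⟨s, t, rfl⟩ ⟨s', t', rfl⟩
    exact ⟨s+s', t+t', dsu_mul m k r s t s' t'⟩
  inv_mem' := by
    rintro x ⟨s, t, rfl⟩
    exact ⟨-s, -t, dsu_inv m k r s t⟩

lemma closure_eq_Dgrp {m : ℕ} {k r : ℤ} {F G : SU3}
    (hF : F = dsu m k r 1 0) (hG : G = dsu m k r 0 1) :
    Subgroup.closure ({F, G} : Set SU3) = Dgrp m k r := by
  apply le_antisymm
  · rw [Subgroup.closure_le]
    intro x hx
    rcases hx with rfl | hx
    · exact ⟨1, 0, hF⟩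
    · rcases hx with rfl
      exact ⟨0, 1, hG⟩
  · rintro x ⟨s, t, rfl⟩
    have h : dsu m k r s t = F ^ s * G ^ t := by
      rw [hF, hG, dsu_zpow, dsu_zpow, dsu_mul]
      exact dsu_congr m k r (by ring) (by ring)
    rw [h]
    have h1 : F ∈ Subgroup.closure ({F, G} : Set SU3) :=
      Subgroup.subset_closure (Set.mem_insert _ _)
    have h2 : G ∈ Subgroup.closure ({F, G} : Set SU3) :=
      Subgroup.subset_closure (Set.mem_insert_of_mem _ rfl)
    exact mul_mem (zpow_mem h1 s) (zpow_mem h2 t)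

lemma dmat_entries {m : ℕ} (hm : m ≠ 0) {a b c a' b' c' : ℤ}
    (h : dmat m a b c = dmat m a' b' c') : (m:ℤ) ∣ a - a' ∧ (m:ℤ) ∣ b - b' := by
  constructor
  · have h00 : dmat m a b c 0 0 = dmat m a' b' c' 0 0 := by rw [h]
    simp [dmat, Matrix.diagonal_apply_eq] at h00
    exact (eps_zpow_eq_iff hm a a').mp h00
  · have h11 : dmat m a b c 1 1 = dmat m a' b' c' 1 1 := by rw [h]
    simp [dmat, Matrix.diagonal_apply_eq] at h11
    exact (eps_zpow_eq_iff hm b b').mp h11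

lemma FM_eq (m : ℕ) (k : ℤ) : FM m k = dmat m 1 k (-k-1) := by
  rw [FM, dmat]
  have h : ![eps m, eps m ^ k, eps m ^ (-k-1)]
      = ![eps m ^ (1:ℤ), eps m ^ k, eps m ^ (-k-1)] := by
    funext i; fin_cases i <;> simp
  rw [h]

lemma GM_eq (m r : ℕ) : GM m r = dmat m 0 (-(r:ℤ)) (r:ℤ) := by
  rw [GM, dmat]
  have h : ![(1:ℂ), eps m ^ (-(r:ℤ)), eps m ^ (r:ℤ)]
      = ![eps m ^ (0:ℤ), eps m ^ (-(r:ℤ)), eps m ^ (r:ℤ)] := by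
    funext i; fin_cases i <;> simp
  rw [h]

theorem statement5 (m n : ℕ) (hm : 0 < m) (hn : 0 < n) (hnm : n ∣ m) (k : ℤ)
    (E B F G : SU3)
    (hE : (E : Matrix (Fin 3) (Fin 3) ℂ) = EM)
    (hB : (B : Matrix (Fin 3) (Fin 3) ℂ) = BM)
    (hF : (F : Matrix (Fin 3) (Fin 3) ℂ) = FM m k)
    (hG : (G : Matrix (Fin 3) (Fin 3) ℂ) = GM m (m / n)) :
    ((fun a => E * a * E⁻¹) '' (Subgroup.closure ({F, G} : Set SU3) : Set SU3)
        = (Subgroup.closure ({F, G} : Set SU3) : Set SU3)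
      ↔ ((m / n : ℕ) : ℤ) ∣ 1 + k + k ^ 2) ∧
    ((fun a => B * a * B⁻¹) '' (Subgroup.closure ({F, G} : Set SU3) : Set SU3)
        = (Subgroup.closure ({F, G} : Set SU3) : Set SU3)
      ↔ ((m / n : ℕ) : ℤ) ∣ 1 + 2 * k) := by
  have hm' : m ≠ 0 := hm.ne'
  set R : ℤ := ((m / n : ℕ) : ℤ) with hR
  have hRdvd : R ∣ (m:ℤ) := ⟨(n:ℤ), by rw [hR]; exact_mod_cast (Nat.div_mul_cancel hnm).symm⟩
  have hFd : F = dsu m k R 1 0 := by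
    apply Subtype.ext
    rw [hF, FM_eq, dsu_val]
    exact dmat_congr m (by ring) (by ring) (by ring)
  have hGd : G = dsu m k R 0 1 := by
    apply Subtype.ext
    rw [hG, GM_eq, dsu_val]
    exact dmat_congr m (by ring) (by ring) (by ring)
  have hcl : Subgroup.closure ({F, G} : Set SU3) = Dgrp m k R := closure_eq_Dgrp hFd hGd
  rw [hcl]
  constructor
  · constructor
    · intro himg
      have h1 : E * F * E⁻¹ ∈ (fun a => E * a * E⁻¹) '' ((Dgrp m k R : Set SU3)) :=
        ⟨F, by exact ⟨1, 0, hFd⟩, rfl⟩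
      rw [himg] at h1
      obtain ⟨s, t, hx⟩ := h1
      have hval : dmat m k (-k-1) 1 = dmat m s (k*s - R*t) (-(1+k)*s + R*t) := by
        have h2 := congrArg Subtype.val hx
        rw [mul_val, mul_val, inv_val, hE, hF, FM_eq, EM_conj, dsu_val] at h2
        exact h2
      obtain ⟨hd1, hd2⟩ := dmat_entries hm' hval
      obtain ⟨u, hu⟩ := hRdvd.trans hd1
      obtain ⟨v, hv⟩ := hRdvd.trans hd2
      exact ⟨k*u - v + t, by linear_combination (k:ℤ)*hu - hv⟩
    · intro hdvd
      obtain ⟨c, hc⟩ := hdvd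
      apply Set.Subset.antisymm
      · rintro y ⟨x, hxm, rfl⟩
        obtain ⟨s, t, rfl⟩ := hxm
        show E * dsu m k R s t * E⁻¹ ∈ Dgrp m k R
        refine ⟨k*s - R*t, c*s - (k+1)*t, ?_⟩
        apply Subtype.ext
        rw [mul_val, mul_val, inv_val, hE, dsu_val, EM_conj, dsu_val]
        exact dmat_congr m rfl (by linear_combination (-s:ℤ)*hc) (by linear_combination (s:ℤ)*hc)
      · intro y hy
        obtain ⟨s, t, rfl⟩ := hy
        refine ⟨E⁻¹ * dsu m k R s t * E, ?_, ?_⟩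
        · show E⁻¹ * dsu m k R s t * E ∈ Dgrp m k R
          refine ⟨-(1+k)*s + R*t, -c*s + k*t, ?_⟩
          apply Subtype.ext
          rw [mul_val, mul_val, inv_val, hE, dsu_val, EM_conj', dsu_val]
          exact dmat_congr m rfl (by linear_combination (s:ℤ)*hc) (by linear_combination (-s:ℤ)*hc)
        · show E * (E⁻¹ * dsu m k R s t * E) * E⁻¹ = dsu m k R s t
          group
  · constructor
    · intro himg
      have h1 : B * F * B⁻¹ ∈ (fun a => B * a * B⁻¹) '' ((Dgrp m k R : Set SU3)) :=
        ⟨F, by exact ⟨1, 0, hFd⟩, rfl⟩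
      rw [himg] at h1
      obtain ⟨s, t, hx⟩ := h1
      have hval : dmat m 1 (-k-1) k = dmat m s (k*s - R*t) (-(1+k)*s + R*t) := by
        have h2 := congrArg Subtype.val hx
        rw [mul_val, mul_val, inv_val, hB, hF, FM_eq, BM_conj, dsu_val] at h2
        exact h2
      obtain ⟨hd1, hd2⟩ := dmat_entries hm' hval
      obtain ⟨u, hu⟩ := hRdvd.trans hd1
      obtain ⟨v, hv⟩ := hRdvd.trans hd2
      exact ⟨k*u - v + t, by linear_combination (k:ℤ)*hu - hv⟩
    · intro hdvd
      obtain ⟨d, hd⟩ := hdvd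
      apply Set.Subset.antisymm
      · rintro y ⟨x, hxm, rfl⟩
        obtain ⟨s, t, rfl⟩ := hxm
        show B * dsu m k R s t * B⁻¹ ∈ Dgrp m k R
        refine ⟨s, d*s - t, ?_⟩
        apply Subtype.ext
        rw [mul_val, mul_val, inv_val, hB, dsu_val, BM_conj, dsu_val]
        exact dmat_congr m rfl (by linear_combination (-s:ℤ)*hd) (by linear_combination (s:ℤ)*hd)
      · intro y hy
        obtain ⟨s, t, rfl⟩ := hy
        refine ⟨B⁻¹ * dsu m k R s t * B, ?_, ?_⟩
        · show B⁻¹ * dsu m k R s t * B ∈ Dgrp m k R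
          refine ⟨s, d*s - t, ?_⟩
          apply Subtype.ext
          rw [mul_val, mul_val, inv_val, hB, dsu_val, BM_conj', dsu_val]
          exact dmat_congr m rfl (by linear_combination (-s:ℤ)*hd) (by linear_combination (s:ℤ)*hd)
        · show B * (B⁻¹ * dsu m k R s t * B) * B⁻¹ = dsu m k R s t
          group

end
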